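/- Let (R, m, k) be a d-dimensional reduced F-finite Noetherian local ring of characteristic p > 0 and let I_e = { r ∈ R : φ(F^e_* r) ∈ m for all φ ∈ Hom_R(F^e_* R, R) }. Then the sequence ( p^{−ed}·e_HK(I_e; R) )_{e∈ℕ} is non-increasing; in particular it converges. -/

import Mathlib

set_option linter.unusedVariables false

open Filter IsLocalRing

/-- `I^[q]` : the ideal generated by the `q`-th powers of the elements of `I`. -/
def Ideal.bracketPow {R : Type*} [CommSemiring R] (I : Ideal R) (q : ℕ) : Ideal R :=
  Ideal.span ((fun x => x ^ q) '' (I : Set R))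

/-- The length of the `R`-module `M` (as a natural number; junk value when infinite),
computed as the Krull dimension of the lattice of submodules of `M`. -/
noncomputable def mlength (R M : Type*) [Ring R] [AddCommGroup M] [Module R M] : ℕ :=
  ((Order.krullDim (Submodule R M)).unbotD 0).toNat

/-- The length of `(R ⧸ I) ⊗_R M`. -/
noncomputable def lenTensor (R : Type*) [CommRing R] (M : Type*) [AddCommGroup M] [Module R M]
    (I : Ideal R) : ℕ :=
  mlength R (TensorProduct R (R ⧸ I) M)

/-- Type synonym: `M` viewed as an `R`-module via the `e`-th iterate of Frobenius,
i.e. `F^e_* M`. -/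
def FrobMod (R : Type*) (p e : ℕ) (M : Type*) : Type _ := M

/-- `F^e_* m`, the element of `F^e_* M` corresponding to `m : M`. -/
def FrobMod.of (R : Type*) (p e : ℕ) {M : Type*} (m : M) : FrobMod R p e M := m

instance FrobMod.instAddCommGroup {R M : Type*} {p e : ℕ} [AddCommGroup M] :
    AddCommGroup (FrobMod R p e M) := inferInstanceAs (AddCommGroup M)

noncomputable instance FrobMod.instModule {R : Type*} [CommSemiring R] {p e : ℕ} [ExpChar R p]
    {M : Type*} [AddCommGroup M] [Module R M] : Module R (FrobMod R p e M) :=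
  Module.compHom M (iterateFrobenius R p e)

/-- `M` has a free direct summand (isomorphic to `R`). -/
def HasFreeDirectSummand (R M : Type*) [CommRing R] [AddCommGroup M] [Module R M] : Prop :=
  ∃ N N' : Submodule R M, IsCompl N N' ∧ Nonempty (N ≃ₗ[R] R)

/-- `R` is `F`-finite: the Frobenius endomorphism is a finite ring homomorphism,
i.e. `F_* R` is a finitely generated `R`-module. -/
def FFinite (R : Type*) [CommRing R] (p : ℕ) [ExpChar R p] : Prop :=
  RingHom.Finite (frobenius R p)

/-- The set `I_e = { r : R | φ (F^e_* r) ∈ 𝔪 for all φ ∈ Hom_R (F^e_* R, R) }`. -/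
def splittingSet (R : Type*) [CommRing R] [IsLocalRing R] (p e : ℕ) [ExpChar R p] : Set R :=
  {r : R | ∀ φ : FrobMod R p e R →ₗ[R] R, φ (FrobMod.of R p e r) ∈ maximalIdeal R}

/-- `α = α(R) = log_p [k : k^p]`, encoded as `[k^{1/p} : k] = p ^ α` for the residue field `k`. -/
def IsAlphaOf (R : Type*) [CommRing R] [IsLocalRing R] (p : ℕ)
    [ExpChar (ResidueField R) p] (α : ℕ) : Prop :=
  Module.finrank (ResidueField R) (FrobMod (ResidueField R) p 1 (ResidueField R)) = p ^ α

/-- `b` records, for each `e`, a direct sum decomposition `F^e_* M ≅ R^{b e} ⊕ N_e`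
where `N_e` has no free direct summand; i.e. `b e` is the `e`-th Frobenius splitting
number of `M`. -/
def IsFrobSplittingNumbersOf (R : Type*) [CommRing R] (p : ℕ) [ExpChar R p]
    (M : Type*) [AddCommGroup M] [Module R M] (b : ℕ → ℕ) : Prop :=
  ∀ e : ℕ, ∃ Fe Ne : Submodule R (FrobMod R p e M),
    IsCompl Fe Ne ∧ Nonempty (Fe ≃ₗ[R] (Fin (b e) → R)) ∧ ¬ HasFreeDirectSummand R Ne

/-- `a e` is the `e`-th Frobenius splitting number of `R`:
`F^e_* R ≅ R^{a e} ⊕ M_e` with `M_e` having no free direct summand. -/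
def IsFrobSplittingNumbers (R : Type*) [CommRing R] (p : ℕ) [ExpChar R p] (a : ℕ → ℕ) : Prop :=
  IsFrobSplittingNumbersOf R p R a

/-- A local ring is regular if its maximal ideal is generated by `dim R` elements. -/
def RegularLocal (R : Type*) [CommRing R] [IsLocalRing R] : Prop :=
  ∃ s : Finset R, Ideal.span (s : Set R) = maximalIdeal R ∧
    (s.card : WithBot (WithTop ℕ)) = ringKrullDim R

/-- A local ring is Cohen–Macaulay if there is a regular sequence in the maximal ideal
of length `dim R`. -/
def CohenMacaulayLocal (R : Type*) [CommRing R] [IsLocalRing R] : Prop :=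
  ∃ rs : List R, (∀ r ∈ rs, r ∈ maximalIdeal R) ∧ RingTheory.Sequence.IsRegular R rs ∧
    (rs.length : WithBot (WithTop ℕ)) = ringKrullDim R

/-- `R` is strongly `F`-regular: for every `c` not in any minimal prime there are `e`
and `φ : F^e_* R → R` with `φ (F^e_* c) = 1`. -/
def StronglyFRegular (R : Type*) [CommRing R] (p : ℕ) [ExpChar R p] : Prop :=
  ∀ c : R, (∀ P ∈ minimalPrimes R, c ∉ P) →
    ∃ (e : ℕ) (φ : FrobMod R p e R →ₗ[R] R), φ (FrobMod.of R p e c) = 1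

universe u v

set_option maxHeartbeats 1000000 in
section


section ProdChain

lemma prod_subtype_lt {α β : Type v} [PartialOrder α] [PartialOrder β] {c : α}
    {x y : α × β} (hx : c ≤ x.1) (hy : c ≤ y.1) (h : x < y) :
    ((⟨x.1, hx⟩ : {a : α // c ≤ a}), x.2) < ((⟨y.1, hy⟩ : {a : α // c ≤ a}), y.2) := by
  rw [lt_iff_le_and_ne] at h ⊢
  refine ⟨⟨h.1.1, h.1.2⟩, fun heq => h.2 ?_⟩
  have h1 : x.1 = y.1 := congrArg (fun z => (z.1 : α)) heq
  have h2 : x.2 = y.2 := congrArg (fun z : {a : α // c ≤ a} × β => z.2) heq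
  exact Prod.ext h1 h2

lemma prod_subtype_lt₂ {α β : Type v} [PartialOrder α] [PartialOrder β] {c : β}
    {x y : α × β} (hx : c ≤ x.2) (hy : c ≤ y.2) (h : x < y) :
    (x.1, (⟨x.2, hx⟩ : {b : β // c ≤ b})) < (y.1, (⟨y.2, hy⟩ : {b : β // c ≤ b})) := by
  rw [lt_iff_le_and_ne] at h ⊢
  refine ⟨⟨h.1.1, h.1.2⟩, fun heq => h.2 ?_⟩
  have h1 : x.1 = y.1 := congrArg (fun z : α × {b : β // c ≤ b} => z.1) heq
  have h2 : x.2 = y.2 := congrArg (fun z : α × {b : β // c ≤ b} => (z.2 : β)) heq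
  exact Prod.ext h1 h2

lemma prod_chain_bound : ∀ (k : ℕ) {α β : Type v} [PartialOrder α] [PartialOrder β]
    (n₁ n₂ : ℕ), (∀ u : LTSeries α, u.length ≤ n₁) → (∀ u : LTSeries β, u.length ≤ n₂) →
    ∀ t : LTSeries (α × β), t.length = k → t.length ≤ n₁ + n₂ := by
  intro k
  induction k with
  | zero => intro α β _ _ n₁ n₂ hα hβ t ht; omega
  | succ k ih =>
    intro α β _ _ n₁ n₂ hα hβ t ht
    have hi0 : (0 : ℕ) < t.length + 1 := by omega
    have hi1 : (1 : ℕ) < t.length + 1 := by omega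
    have h01 : t ⟨0, hi0⟩ < t ⟨1, hi1⟩ := t.strictMono (by simp [Fin.lt_def])
    rw [Prod.lt_iff] at h01
    rcases h01 with h01 | h01
    · -- first coordinate increases
      set c : α := (t ⟨1, hi1⟩).1 with hc
      have hn₁ : 1 ≤ n₁ := by
        have := hα (((RelSeries.singleton _ c : LTSeries α)).cons (t ⟨0, hi0⟩).1 h01.1)
        simpa [RelSeries.cons, RelSeries.append, RelSeries.singleton] using this
      have hα' : ∀ u : LTSeries {a : α // c ≤ a}, u.length ≤ n₁ - 1 := by
        intro u
        have hv := hα ((u.map Subtype.val (fun a b hab => hab)).cons (t ⟨0, hi0⟩).1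
          (lt_of_lt_of_le h01.1 u.head.2))
        simp only [RelSeries.cons, RelSeries.append, RelSeries.singleton, LTSeries.map, LTSeries.mk, RelSeries.length] at hv
        omega
      have hmem : ∀ i : Fin (k + 1), c ≤ (t (⟨(i : ℕ) + 1, by omega⟩ : Fin (t.length + 1))).1 := by
        intro i
        have : (⟨1, hi1⟩ : Fin (t.length + 1)) ≤ ⟨(i : ℕ) + 1, by omega⟩ := by
          simp [Fin.le_def]
        exact ((t.strictMono.monotone this) : _ ≤ _).1
      let t' : LTSeries ({a : α // c ≤ a} × β) :=
        ⟨k, fun i => ((⟨(t ⟨(i : ℕ) + 1, by omega⟩).1, hmem i⟩ : {a : α // c ≤ a}),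
          (t ⟨(i : ℕ) + 1, by omega⟩).2), by
            intro i
            exact prod_subtype_lt _ _ (t.strictMono (by simp [Fin.lt_def]))⟩
      have := ih (n₁ - 1) n₂ hα' hβ t' rfl
      simp only [RelSeries.length] at this
      have ht' : t'.length = k := rfl
      omega
    · -- second coordinate increases
      set c : β := (t ⟨1, hi1⟩).2 with hc
      have hn₂ : 1 ≤ n₂ := by
        have := hβ (((RelSeries.singleton _ c : LTSeries β)).cons (t ⟨0, hi0⟩).2 h01.2)
        simpa [RelSeries.cons, RelSeries.append, RelSeries.singleton] using this
      have hβ' : ∀ u : LTSeries {b : β // c ≤ b}, u.length ≤ n₂ - 1 := by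
        intro u
        have hv := hβ ((u.map Subtype.val (fun a b hab => hab)).cons (t ⟨0, hi0⟩).2
          (lt_of_lt_of_le h01.2 u.head.2))
        simp only [RelSeries.cons, RelSeries.append, RelSeries.singleton, LTSeries.map, LTSeries.mk, RelSeries.length] at hv
        omega
      have hmem : ∀ i : Fin (k + 1), c ≤ (t (⟨(i : ℕ) + 1, by omega⟩ : Fin (t.length + 1))).2 := by
        intro i
        have : (⟨1, hi1⟩ : Fin (t.length + 1)) ≤ ⟨(i : ℕ) + 1, by omega⟩ := by
          simp [Fin.le_def]
        exact ((t.strictMono.monotone this) : _ ≤ _).2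
      let t' : LTSeries (α × {b : β // c ≤ b}) :=
        ⟨k, fun i => ((t ⟨(i : ℕ) + 1, by omega⟩).1,
          (⟨(t ⟨(i : ℕ) + 1, by omega⟩).2, hmem i⟩ : {b : β // c ≤ b})), by
            intro i
            exact prod_subtype_lt₂ _ _ (t.strictMono (by simp [Fin.lt_def]))⟩
      have := ih n₁ (n₂ - 1) hα hβ' t' rfl
      simp only [RelSeries.length] at this
      have ht' : t'.length = k := rfl
      omega

end ProdChain


section Modules

variable {R : Type u} [CommRing R]

lemma psi_strictMono {M : Type v} [AddCommGroup M] [Module R M] (N : Submodule R M) :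
    StrictMono (fun W : Submodule R M =>
      (W.comap N.subtype, W.map N.mkQ)) := by
  intro x y h
  rw [lt_iff_le_and_ne]
  refine ⟨⟨Submodule.comap_mono h.le, Submodule.map_mono h.le⟩, fun heq => h.ne ?_⟩
  have hcomap : x.comap N.subtype = y.comap N.subtype :=
    congrArg (fun z : Submodule R ↥N × Submodule R (M ⧸ N) => z.1) heq
  have hmap : x.map N.mkQ = y.map N.mkQ :=
    congrArg (fun z : Submodule R ↥N × Submodule R (M ⧸ N) => z.2) heq
  have h1 : N ⊓ x = N ⊓ y := by
    rw [← Submodule.map_comap_subtype N x, ← Submodule.map_comap_subtype N y, hcomap]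
  have h2 : N ⊔ x = N ⊔ y := by
    rw [← Submodule.comap_map_mkQ, ← Submodule.comap_map_mkQ, hmap]
  have hy : y ≤ x ⊔ N := by rw [sup_comm]; exact h2 ▸ le_sup_right
  have : y = (x ⊔ N) ⊓ y := (inf_eq_right.mpr hy).symm
  rw [sup_inf_assoc_of_le _ h.le, ← h1, inf_comm, sup_inf_self] at this
  exact this.symm

/-- transfer of chain bounds along a decomposition by a submodule. -/
lemma chain_bound_of_submodule {M : Type v} [AddCommGroup M] [Module R M] (N : Submodule R M)
    (n₁ n₂ : ℕ) (h₁ : ∀ u : LTSeries (Submodule R ↥N), u.length ≤ n₁)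
    (h₂ : ∀ u : LTSeries (Submodule R (M ⧸ N)), u.length ≤ n₂) :
    ∀ t : LTSeries (Submodule R M), t.length ≤ n₁ + n₂ := by
  intro t
  have := prod_chain_bound t.length n₁ n₂ h₁ h₂ (t.map _ (psi_strictMono N)) rfl
  simpa using this

lemma chain_bound_of_subsingleton {M : Type v} [AddCommGroup M] [Module R M]
    (h : Subsingleton M) (t : LTSeries (Submodule R M)) : t.length ≤ 0 := by
  by_contra hlen
  have h01 : t ⟨0, by omega⟩ < t ⟨1, by omega⟩ := t.strictMono (by simp [Fin.lt_def])
  have : t ⟨0, by omega⟩ = t ⟨1, by omega⟩ := by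
    ext z
    have : z = 0 := Subsingleton.elim _ _
    simp [this]
  exact h01.ne this

/-- cyclic module killed by the maximal ideal: chains have length at most 1. -/
lemma chain_bound_cyclic [IsLocalRing R] {M : Type v} [AddCommGroup M] [Module R M] (x : M)
    (hx : Submodule.span R {x} = ⊤)
    (hm : maximalIdeal R • (⊤ : Submodule R M) = ⊥)
    (t : LTSeries (Submodule R M)) : t.length ≤ 1 := by
  have key : ∀ W : Submodule R M, W = ⊥ ∨ W = ⊤ := by
    intro W
    rcases eq_or_ne W ⊥ with h | h
    · exact Or.inl h
    · right
      obtain ⟨w, hwW, hw0⟩ := (Submodule.ne_bot_iff W).mp h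
      have hwx : w ∈ Submodule.span R {x} := by rw [hx]; trivial
      obtain ⟨a, ha⟩ := Submodule.mem_span_singleton.mp hwx
      have haU : IsUnit a := by
        by_contra haU
        have : a ∈ maximalIdeal R := haU
        have : a • x ∈ maximalIdeal R • (⊤ : Submodule R M) :=
          Submodule.smul_mem_smul this trivial
        rw [hm] at this
        exact hw0 (by rw [← ha]; simpa using this)
      obtain ⟨b, hb⟩ := isUnit_iff_exists_inv'.mp haU
      have hxW : x ∈ W := by
        have : (b * a) • x ∈ W := by
          rw [mul_smul, ha]; exact Submodule.smul_mem _ _ hwW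
        rwa [hb, one_smul] at this
      rw [eq_top_iff, ← hx, Submodule.span_le]
      simpa using hxW
  by_contra hlen
  have h2 : 2 ≤ t.length := by omega
  have h01 : t ⟨0, by omega⟩ < t ⟨1, by omega⟩ := t.strictMono (by simp [Fin.lt_def])
  have h12 : t ⟨1, by omega⟩ < t ⟨2, by omega⟩ := t.strictMono (by simp [Fin.lt_def])
  rcases key (t ⟨1, by omega⟩) with h | h
  · rw [h] at h01; exact (not_lt_bot h01)
  · rw [h] at h12; exact lt_irrefl _ (lt_of_lt_of_le h12 le_top)

end Modules
variable {R : Type u} [CommRing R]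

section Part3
variable [IsLocalRing R]

lemma smul_top_bot_submodule {M : Type v} [AddCommGroup M] [Module R M] {I : Ideal R}
    (hm : I • (⊤ : Submodule R M) = ⊥) (N : Submodule R M) :
    I • (⊤ : Submodule R ↥N) = ⊥ := by
  rw [eq_bot_iff]
  refine Submodule.smul_le.mpr fun a ha y _ => ?_
  have : a • (y : M) ∈ I • (⊤ : Submodule R M) := Submodule.smul_mem_smul ha trivial
  rw [hm] at this
  have : a • (y : M) = 0 := this
  simp only [Submodule.mem_bot]
  exact Subtype.ext (by simpa using this)

lemma smul_top_bot_quotient {M : Type v} [AddCommGroup M] [Module R M] {I : Ideal R}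
    (N : Submodule R M) (hm : I • (⊤ : Submodule R M) ≤ N) :
    I • (⊤ : Submodule R (M ⧸ N)) = ⊥ := by
  have htop : (⊤ : Submodule R (M ⧸ N)) = Submodule.map N.mkQ ⊤ := by
    rw [Submodule.map_top, Submodule.range_mkQ]
  rw [eq_bot_iff, htop, ← Submodule.map_smul'', Submodule.map_le_iff_le_comap]
  refine le_trans hm ?_
  intro z hz
  simp only [Submodule.mem_comap, Submodule.mem_bot, Submodule.mkQ_apply,
    Submodule.Quotient.mk_eq_zero]
  exact hz

/-- A finitely generated module killed by the maximal ideal has bounded chains. -/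
lemma chain_bound_fg_killed : ∀ (r : ℕ) (M : Type v) [AddCommGroup M] [Module R M]
    (s : Finset M), s.card ≤ r → Submodule.span R (s : Set M) = ⊤ →
    maximalIdeal R • (⊤ : Submodule R M) = ⊥ →
    ∃ n, ∀ t : LTSeries (Submodule R M), t.length ≤ n := by
  intro r
  induction r with
  | zero =>
    intro M _ _ s hs hspan hm
    have : s = ∅ := Finset.card_eq_zero.mp (Nat.le_zero.mp hs)
    subst this
    have hsing : Subsingleton M := by
      constructor
      intro a b
      have ha : a ∈ (⊤ : Submodule R M) := trivial
      rw [← hspan] at ha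
      simp only [Finset.coe_empty, Submodule.span_empty, Submodule.mem_bot] at ha
      have hb : b ∈ (⊤ : Submodule R M) := trivial
      rw [← hspan] at hb
      simp only [Finset.coe_empty, Submodule.span_empty, Submodule.mem_bot] at hb
      rw [ha, hb]
    exact ⟨0, chain_bound_of_subsingleton hsing⟩
  | succ r ih =>
    intro M _ _ s hs hspan hm
    classical
    rcases s.eq_empty_or_nonempty with rfl | ⟨x, hx⟩
    · have hsing : Subsingleton M := by
        constructor
        intro a b
        have ha : a ∈ (⊤ : Submodule R M) := trivial
        rw [← hspan] at ha
        simp only [Finset.coe_empty, Submodule.span_empty, Submodule.mem_bot] at ha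
        have hb : b ∈ (⊤ : Submodule R M) := trivial
        rw [← hspan] at hb
        simp only [Finset.coe_empty, Submodule.span_empty, Submodule.mem_bot] at hb
        rw [ha, hb]
      exact ⟨0, chain_bound_of_subsingleton hsing⟩
    · set N : Submodule R M := Submodule.span R {x} with hN
      -- the submodule N is cyclic, killed by the maximal ideal
      have hxN : x ∈ N := Submodule.mem_span_singleton_self x
      have hNspan : Submodule.span R {(⟨x, hxN⟩ : ↥N)} = ⊤ := by
        rw [eq_top_iff]
        intro y _
        obtain ⟨a, ha⟩ := Submodule.mem_span_singleton.mp (y.2)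
        exact Submodule.mem_span_singleton.mpr ⟨a, Subtype.ext (by simpa using ha)⟩
      have h₁ : ∀ u : LTSeries (Submodule R ↥N), u.length ≤ 1 :=
        chain_bound_cyclic _ hNspan (smul_top_bot_submodule hm N)
      -- the quotient is generated by the images of the remaining generators
      have hquot : Submodule.span R (((s.erase x).image N.mkQ : Finset (M ⧸ N)) : Set (M ⧸ N))
          = ⊤ := by
        rw [Finset.coe_image, Submodule.span_image]
        have hsup : Submodule.span R ((s.erase x : Finset M) : Set M) ⊔ N = ⊤ := by
          rw [hN, ← Submodule.span_union, ← hspan]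
          congr 1
          ext z
          by_cases hz : z = x <;> simp [hz, hx]
        have := congrArg (Submodule.map N.mkQ) hsup
        rw [Submodule.map_sup, Submodule.map_top, Submodule.range_mkQ] at this
        have hNbot : Submodule.map N.mkQ N = ⊥ := by
          rw [eq_bot_iff, Submodule.map_le_iff_le_comap]
          intro z hz
          simp only [Submodule.mem_comap, Submodule.mkQ_apply, Submodule.mem_bot,
            Submodule.Quotient.mk_eq_zero]
          exact hz
        rw [hNbot, sup_bot_eq] at this
        exact this
      have hq : maximalIdeal R • (⊤ : Submodule R (M ⧸ N)) = ⊥ :=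
        smul_top_bot_quotient N (hm ▸ bot_le)
      obtain ⟨n₂, h₂⟩ := ih (M ⧸ N) ((s.erase x).image N.mkQ)
        (le_trans (Finset.card_image_le) (by
          have := Finset.card_erase_of_mem hx
          omega)) hquot hq
      exact ⟨1 + n₂, chain_bound_of_submodule N 1 n₂ h₁ h₂⟩

/-- A Noetherian module killed by a power of the maximal ideal has bounded chains. -/
lemma chain_bound_pow_killed : ∀ (k : ℕ) (M : Type v) [AddCommGroup M] [Module R M]
    [IsNoetherian R M], (maximalIdeal R) ^ k • (⊤ : Submodule R M) = ⊥ →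
    ∃ n, ∀ t : LTSeries (Submodule R M), t.length ≤ n := by
  intro k
  induction k with
  | zero =>
    intro M _ _ _ hm
    rw [pow_zero, Ideal.one_eq_top, Submodule.top_smul] at hm
    have hsing : Subsingleton M := by
      constructor
      intro a b
      have ha : a ∈ (⊤ : Submodule R M) := trivial
      have hb : b ∈ (⊤ : Submodule R M) := trivial
      rw [hm] at ha hb
      simp only [Submodule.mem_bot] at ha hb
      rw [ha, hb]
    exact ⟨0, chain_bound_of_subsingleton hsing⟩
  | succ k ih =>
    intro M _ _ _ hm
    set N : Submodule R M := (maximalIdeal R) ^ k • ⊤ with hN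
    have hmN : maximalIdeal R • N = ⊥ := by
      rw [hN, ← mul_smul, ← pow_succ']
      exact hm
    -- N is Noetherian, hence finitely generated, and killed by m
    obtain ⟨s, hsspan⟩ := (IsNoetherian.noetherian N : N.FG)
    -- lift to a finset of ↥N
    have hfg : (⊤ : Submodule R ↥N).FG := by
      rw [← Submodule.fg_top] at *
      exact IsNoetherian.noetherian _
    obtain ⟨sN, hsN⟩ := hfg
    have hmtop : maximalIdeal R • (⊤ : Submodule R ↥N) = ⊥ := by
      rw [eq_bot_iff]
      refine Submodule.smul_le.mpr fun a ha y _ => ?_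
      have h1 : a • (y : M) ∈ maximalIdeal R • N := Submodule.smul_mem_smul ha y.2
      rw [hmN] at h1
      simp only [Submodule.mem_bot] at h1 ⊢
      exact Subtype.ext (by simpa using h1)
    obtain ⟨n₁, h₁⟩ := chain_bound_fg_killed sN.card ↥N sN le_rfl hsN hmtop
    have hq : (maximalIdeal R) ^ k • (⊤ : Submodule R (M ⧸ N)) = ⊥ :=
      smul_top_bot_quotient N (le_of_eq hN.symm)
    obtain ⟨n₂, h₂⟩ := ih (M ⧸ N) hq
    exact ⟨n₁ + n₂, chain_bound_of_submodule N n₁ n₂ h₁ h₂⟩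

end Part3
variable {R : Type u} [CommRing R]


section Part4

lemma chain_bound_quotient_ideal [IsLocalRing R] [IsNoetherianRing R] (J : Ideal R) (k : ℕ)
    (hk : (maximalIdeal R) ^ k ≤ J) :
    ∃ n, ∀ t : LTSeries (Submodule R (R ⧸ J)), t.length ≤ n := by
  refine chain_bound_pow_killed k (R ⧸ J) ?_
  rw [eq_bot_iff]
  refine Submodule.smul_le.mpr fun a ha y _ => ?_
  obtain ⟨y', rfl⟩ := Submodule.mkQ_surjective J y
  rw [Submodule.mem_bot, Submodule.mkQ_apply, ← Submodule.Quotient.mk_smul, smul_eq_mul,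
    Submodule.Quotient.mk_eq_zero]
  exact J.mul_mem_right _ (hk ha)

lemma unbot_toNat_mono {a b : WithBot ℕ∞} {n : ℕ} (hab : a ≤ b) (hb : b ≤ (n : ℕ∞)) :
    (a.unbotD 0).toNat ≤ (b.unbotD 0).toNat := by
  cases a with
  | bot => simp
  | coe x =>
    cases b with
    | bot => simp at hab
    | coe y =>
      rw [WithBot.coe_le_coe] at hab hb
      simp only [WithBot.unbotD_coe]
      exact ENat.toNat_le_toNat hab (ne_top_of_le_ne_top (ENat.coe_ne_top n) hb)

lemma krullDim_le_of_chain_bound {α : Type v} [Preorder α] {n : ℕ}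
    (h : ∀ t : LTSeries α, t.length ≤ n) : Order.krullDim α ≤ ((n : ℕ∞) : WithBot ℕ∞) := by
  rw [Order.krullDim]
  exact iSup_le fun t => by exact_mod_cast h t

lemma mlength_eq_of_equiv {M : Type v} {M' : Type v} [AddCommGroup M] [Module R M]
    [AddCommGroup M'] [Module R M'] (e : M ≃ₗ[R] M') : mlength R M = mlength R M' := by
  unfold mlength
  rw [Order.krullDim_eq_of_orderIso (Submodule.orderIsoMapComap e)]

lemma mlength_le_of_surjective {M : Type v} {M' : Type v} [AddCommGroup M] [Module R M]
    [AddCommGroup M'] [Module R M'] {n : ℕ}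
    (hn : ∀ t : LTSeries (Submodule R M), t.length ≤ n)
    (f : M →ₗ[R] M') (hf : Function.Surjective f) : mlength R M' ≤ mlength R M := by
  have hsm : StrictMono (Submodule.comap f) := fun a b h =>
    lt_of_le_of_ne (Submodule.comap_mono h.le)
      (fun e => h.ne (Submodule.comap_injective_of_surjective hf e))
  have h1 : Order.krullDim (Submodule R M') ≤ Order.krullDim (Submodule R M) :=
    Order.krullDim_le_of_strictMono _ hsm
  exact unbot_toNat_mono h1 (krullDim_le_of_chain_bound hn)

end Part4
section Part5

variable {R : Type u} [CommRing R] {p : ℕ} [Fact p.Prime] [CharP R p]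

/-- unwrap -/
def unFrob {R : Type*} {p e : ℕ} {M : Type*} (x : FrobMod R p e M) : M := x

lemma frob_smul (e : ℕ) (a : R) (x : FrobMod R p e R) :
    a • x = FrobMod.of R p e (a ^ p ^ e * unFrob x) := by
  show (iterateFrobenius R p e) a * (unFrob x) = _
  rw [iterateFrobenius_def]
  rfl

/-- shifting a splitting map down one Frobenius level by precomposing with `x ↦ x^p`. -/
noncomputable def frobShift (e : ℕ) (φ : FrobMod R p (e+1) R →ₗ[R] R) :
    FrobMod R p e R →ₗ[R] R where
  toFun x := φ (FrobMod.of R p (e+1) (unFrob x ^ p))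
  map_add' x y := by
    show φ (FrobMod.of R p (e+1) ((unFrob x + unFrob y) ^ p)) = _
    rw [add_pow_char]
    exact φ.map_add _ _
  map_smul' a x := by
    show φ (FrobMod.of R p (e+1) ((a ^ p ^ e * unFrob x) ^ p)) = _
    have h1 : (a ^ p ^ e * unFrob x) ^ p = a ^ p ^ (e+1) * (unFrob x) ^ p := by
      rw [mul_pow, ← pow_mul, ← pow_succ]
    rw [h1]
    have h2 : FrobMod.of R p (e+1) (a ^ p ^ (e+1) * (unFrob x)^p)
        = a • FrobMod.of R p (e+1) ((unFrob x)^p) := (frob_smul (e+1) a _).symm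
    rw [h2, map_smul]
    rfl

lemma pow_mem_splittingSet [IsLocalRing R] (e : ℕ) {r : R} (hr : r ∈ splittingSet R p e) :
    r ^ p ∈ splittingSet R p (e+1) := by
  intro φ
  exact hr (frobShift e φ)

lemma maximal_pow_mem_splittingSet [IsLocalRing R] (e : ℕ) {x : R}
    (hx : x ∈ IsLocalRing.maximalIdeal R) : x ^ p ^ e ∈ splittingSet R p e := by
  intro φ
  have h1 : FrobMod.of R p e (x ^ p ^ e) = x • FrobMod.of R p e (1 : R) := by
    rw [frob_smul]
    show FrobMod.of R p e (x ^ p ^ e) = FrobMod.of R p e (x ^ p ^ e * 1)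
    rw [mul_one]
  rw [h1, map_smul, smul_eq_mul]
  exact Ideal.mul_mem_right _ _ hx

lemma bracketPow_le_of_le {I J : Ideal R} (h : I ≤ J) (q : ℕ) :
    I.bracketPow q ≤ J.bracketPow q := by
  apply Ideal.span_mono
  exact Set.image_mono h

lemma bracketPow_bracketPow (I : Ideal R) (q q' : ℕ) :
    I.bracketPow (q * q') ≤ (I.bracketPow q).bracketPow q' := by
  rw [Ideal.bracketPow, Ideal.span_le]
  rintro _ ⟨x, hx, rfl⟩
  show x ^ (q * q') ∈ _
  rw [pow_mul]
  exact Ideal.subset_span ⟨x ^ q, Ideal.subset_span ⟨x, hx, rfl⟩, rfl⟩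

lemma mem_bracketPow {I : Ideal R} {x : R} (hx : x ∈ I) (q : ℕ) : x ^ q ∈ I.bracketPow q :=
  Ideal.subset_span ⟨x, hx, rfl⟩

end Part5

section Glue
variable {R : Type u} [CommRing R]

lemma lenTensor_eq (J : Ideal R) : lenTensor R R J = mlength R (R ⧸ J) :=
  mlength_eq_of_equiv (TensorProduct.rid R (R ⧸ J))

end Glue

end

/-- the sequence `p^{-ed} e_HK(I_e; R)` is non-increasing, hence converges. -/
theorem statement10 {R : Type*} [CommRing R] [IsNoetherianRing R] [IsLocalRing R] [IsReduced R]
    {p : ℕ} [Fact p.Prime] [CharP R p] (hfin : FFinite R p)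
    (d : ℕ) (hd : ringKrullDim R = d)
    (Ie : ℕ → Ideal R) (hIe : ∀ e, (Ie e : Set R) = splittingSet R p e)
    (c : ℕ → ℝ)
    (hc : ∀ e, Tendsto
      (fun e' : ℕ => (lenTensor R R ((Ie e).bracketPow (p ^ e')) : ℝ) / (p : ℝ) ^ (e' * d))
      atTop (nhds (c e))) :
    Antitone (fun e : ℕ => c e / (p : ℝ) ^ (e * d)) ∧
    ∃ L : ℝ, Tendsto (fun e : ℕ => c e / (p : ℝ) ^ (e * d)) atTop (nhds L) := by

  have hp0 : (0 : ℝ) < (p : ℝ) := by exact_mod_cast (Fact.out : p.Prime).pos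
  -- step 1: `(Ie e)^[p] ⊆ Ie (e+1)`
  have hIem : ∀ e, (Ie e).bracketPow p ≤ Ie (e + 1) := by
    intro e
    rw [Ideal.bracketPow, Ideal.span_le]
    rintro _ ⟨x, hx, rfl⟩
    have hx' : x ∈ splittingSet R p e := by rw [← hIe]; exact hx
    show x ^ p ∈ (Ie (e+1) : Set R)
    rw [hIe]
    exact pow_mem_splittingSet e hx'
  -- step 2: bracket powers of `Ie e` contain a power of the maximal ideal
  have hrad : ∀ e q, maximalIdeal R ≤ ((Ie e).bracketPow q).radical := by
    intro e q x hx
    refine ⟨p ^ e * q, ?_⟩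
    rw [pow_mul]
    refine mem_bracketPow ?_ q
    show x ^ p ^ e ∈ (Ie e : Set R)
    rw [hIe]
    exact maximal_pow_mem_splittingSet e hx
  have hpow : ∀ e q, ∃ k, (maximalIdeal R) ^ k ≤ (Ie e).bracketPow q := fun e q =>
    Ideal.exists_pow_le_of_le_radical_of_fg (hrad e q) (IsNoetherian.noetherian _)
  -- step 3: termwise comparison of lengths
  have key : ∀ e e', (lenTensor R R ((Ie (e+1)).bracketPow (p ^ e')) : ℝ)
      ≤ (lenTensor R R ((Ie e).bracketPow (p ^ (e'+1))) : ℝ) := by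
    intro e e'
    have hJJ' : (Ie e).bracketPow (p ^ (e'+1)) ≤ (Ie (e+1)).bracketPow (p ^ e') := by
      have h1 : p ^ (e'+1) = p * p ^ e' := pow_succ' p e'
      rw [h1]
      exact le_trans (bracketPow_bracketPow _ p (p ^ e'))
        (bracketPow_le_of_le (hIem e) (p ^ e'))
    obtain ⟨k, hk⟩ := hpow e (p ^ (e'+1))
    obtain ⟨n, hn⟩ := chain_bound_quotient_ideal _ k hk
    have hf : Function.Surjective
        (Submodule.mapQ ((Ie e).bracketPow (p ^ (e'+1))) ((Ie (e+1)).bracketPow (p ^ e'))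
          LinearMap.id (by simpa using hJJ')) := by
      intro z
      obtain ⟨y, rfl⟩ := Submodule.mkQ_surjective _ z
      exact ⟨Submodule.mkQ _ y, rfl⟩
    have h2 := mlength_le_of_surjective hn _ hf
    rw [lenTensor_eq, lenTensor_eq]
    exact_mod_cast h2
  -- step 4: pass to limits
  have key2 : ∀ e, c (e+1) ≤ (p : ℝ) ^ d * c e := by
    intro e
    have hA := hc (e+1)
    have hB : Tendsto (fun e' : ℕ =>
        (p : ℝ) ^ d * ((lenTensor R R ((Ie e).bracketPow (p ^ (e'+1))) : ℝ)
          / (p : ℝ) ^ ((e'+1) * d))) atTop (nhds ((p : ℝ) ^ d * c e)) :=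
      ((hc e).comp (tendsto_add_atTop_nat 1)).const_mul _
    refine le_of_tendsto_of_tendsto' hA hB fun e' => ?_
    have hposd : (0:ℝ) < (p : ℝ) ^ (e' * d) := by positivity
    have heq : (p : ℝ) ^ d * ((lenTensor R R ((Ie e).bracketPow (p ^ (e'+1))) : ℝ)
        / (p : ℝ) ^ ((e'+1) * d))
        = (lenTensor R R ((Ie e).bracketPow (p ^ (e'+1))) : ℝ) / (p : ℝ) ^ (e' * d) := by
      rw [show (e'+1) * d = e' * d + d by ring, pow_add]
      field_simp
      ring
    rw [heq]
    gcongr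
    exact_mod_cast key e e'
  have hnonneg : ∀ e, 0 ≤ c e := by
    intro e
    refine le_of_tendsto_of_tendsto' (tendsto_const_nhds) (hc e) fun e' => ?_
    positivity
  have hanti : Antitone (fun e : ℕ => c e / (p : ℝ) ^ (e * d)) := by
    apply antitone_nat_of_succ_le
    intro e
    have h1 := key2 e
    have hpe : (0:ℝ) < (p:ℝ) ^ (e * d) := by positivity
    have hpd : (0:ℝ) < (p:ℝ) ^ d := by positivity
    show c (e+1) / (p : ℝ) ^ ((e+1) * d) ≤ c e / (p : ℝ) ^ (e * d)
    rw [show (e+1) * d = e * d + d by ring, pow_add, div_le_div_iff₀ (by positivity) hpe]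
    nlinarith [mul_le_mul_of_nonneg_right h1 hpe.le]
  refine ⟨hanti, ⟨⨅ e, c e / (p : ℝ) ^ (e * d), ?_⟩⟩
  apply tendsto_atTop_ciInf hanti
  refine ⟨0, ?_⟩
  rintro x ⟨e, rfl⟩
  have hpe : (0:ℝ) < (p:ℝ) ^ (e * d) := by positivity
  exact div_nonneg (hnonneg e) hpe.le
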